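/- If f : ℝⁿ → ℝ is Lipschitz with constant L and D is a closed Euclidean ball of radius r > 0 centered at the origin, then the second derivative map x ↦ iteratedFDeriv ℝ 2 Φ_D x of the double average Φ_D is Lipschitz: there exists a constant K ≥ 0 (depending on L and D) such that ‖iteratedFDeriv ℝ 2 Φ_D x₁ − iteratedFDeriv ℝ 2 Φ_D x₂‖ ≤ K ‖x₁ − x₂‖ for all x₁, x₂. -/

import Mathlib

open MeasureTheory
open scoped NNReal

/-- The Steklov-type average of `f` over `D`. -/
noncomputable def steklovAvg (n : ℕ) (D : Set (EuclideanSpace ℝ (Fin n)))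
    (f : EuclideanSpace ℝ (Fin n) → ℝ) (x : EuclideanSpace ℝ (Fin n)) : ℝ :=
  (volume D).toReal⁻¹ • ∫ y in D, f (x + y)

/-- The double Steklov-type average of `f` over `D`. -/
noncomputable def steklovAvg₂ (n : ℕ) (D : Set (EuclideanSpace ℝ (Fin n)))
    (f : EuclideanSpace ℝ (Fin n) → ℝ) : EuclideanSpace ℝ (Fin n) → ℝ :=
  steklovAvg n D (steklovAvg n D f)

section Aux

open Metric Set Filter

variable {n : ℕ} {F : Type*} [NormedAddCommGroup F] [NormedSpace ℝ F] [FiniteDimensional ℝ F]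

/-- Generalized Steklov average for vector-valued functions. -/
noncomputable def skAvg (r : ℝ) (g : EuclideanSpace ℝ (Fin n) → F)
    (x : EuclideanSpace ℝ (Fin n)) : F :=
  (volume (closedBall (0 : EuclideanSpace ℝ (Fin n)) r)).toReal⁻¹ •
    ∫ y in closedBall (0 : EuclideanSpace ℝ (Fin n)) r, g (x + y)

/-- Candidate derivative of the Steklov average. -/
noncomputable def skDeriv (r : ℝ) (g : EuclideanSpace ℝ (Fin n) → F)
    (x : EuclideanSpace ℝ (Fin n)) : EuclideanSpace ℝ (Fin n) →L[ℝ] F :=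
  (volume (closedBall (0 : EuclideanSpace ℝ (Fin n)) r)).toReal⁻¹ •
    ∫ y in closedBall (0 : EuclideanSpace ℝ (Fin n)) r, fderiv ℝ g (x + y)

lemma norm_smul_nonneg' {G : Type*} [SeminormedAddCommGroup G] [NormedSpace ℝ G]
    {c : ℝ} (hc : 0 ≤ c) (v : G) : ‖c • v‖ = c * ‖v‖ := by
  rw [norm_smul, Real.norm_eq_abs, abs_of_nonneg hc]

lemma aux_pow (m : ℕ) {a b : ℝ} (hb : 0 ≤ b) (hab : b ≤ a) :
    a ^ (m + 1) - b ^ (m + 1) ≤ (m + 1 : ℝ) * a ^ m * (a - b) := by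
  induction m with
  | zero => simp
  | succ k ih =>
    have ha : 0 ≤ a := hb.trans hab
    have h2 : b ^ (k + 1) ≤ a ^ (k + 1) := pow_le_pow_left₀ hb hab (k + 1)
    have h3 := mul_le_mul_of_nonneg_left ih ha
    have h5 : b ^ (k + 1) * (a - b) ≤ a ^ (k + 1) * (a - b) :=
      mul_le_mul_of_nonneg_right h2 (sub_nonneg.2 hab)
    have e3 : a * a ^ k = a ^ (k + 1) := by ring
    have h4 : a * (((k : ℝ) + 1) * a ^ k * (a - b)) = ((k : ℝ) + 1) * a ^ (k + 1) * (a - b) := by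
      rw [← e3]; ring
    have key : a ^ (k + 1 + 1) - b ^ (k + 1 + 1)
        = a * (a ^ (k + 1) - b ^ (k + 1)) + b ^ (k + 1) * (a - b) := by ring
    push_cast
    rw [key]
    push_cast at h3
    linarith [h3, h5, h4]

lemma measure_sdiff_le {r : ℝ} (hn : 1 ≤ n) (hr : 0 < r) (x₁ x₂ : EuclideanSpace ℝ (Fin n)) :
    (volume (closedBall x₁ r \ closedBall x₂ r)).toReal ≤
      ((n : ℝ) * (2 * r) ^ (n - 1) * (volume (ball (0 : EuclideanSpace ℝ (Fin n)) 1)).toReal +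
        (volume (closedBall (0 : EuclideanSpace ℝ (Fin n)) r)).toReal / r) * ‖x₁ - x₂‖ := by
  set v1 := (volume (ball (0 : EuclideanSpace ℝ (Fin n)) 1)).toReal with hv1
  set d := ‖x₁ - x₂‖ with hd
  have hd0 : 0 ≤ d := norm_nonneg _
  have hv10 : 0 ≤ v1 := ENNReal.toReal_nonneg
  have hC1 : 0 ≤ (n : ℝ) * (2 * r) ^ (n - 1) * v1 := by positivity
  have hC2 : 0 ≤ (volume (closedBall (0 : EuclideanSpace ℝ (Fin n)) r)).toReal / r := by positivity
  have hdist : dist x₁ x₂ = d := by rw [dist_eq_norm]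
  by_cases hcase : d ≤ r
  · -- small translation case
    have hsub : closedBall x₁ r ⊆ closedBall x₂ (r + d) :=
      closedBall_subset_closedBall' (by rw [hdist])
    have hdiff_sub : closedBall x₁ r \ closedBall x₂ r ⊆
        closedBall x₂ (r + d) \ closedBall x₂ r := diff_subset_diff hsub Subset.rfl
    have hmeas_eq : volume (closedBall x₂ (r + d) \ closedBall x₂ r)
        = volume (closedBall x₂ (r + d)) - volume (closedBall x₂ r) :=
      measure_diff (closedBall_subset_closedBall (by linarith))
        measurableSet_closedBall.nullMeasurableSet measure_closedBall_lt_top.ne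
    have hball1 : volume (closedBall x₂ (r + d))
        = ENNReal.ofReal ((r + d) ^ n) * volume (ball (0 : EuclideanSpace ℝ (Fin n)) 1) := by
      rw [Measure.addHaar_closedBall (volume : Measure (EuclideanSpace ℝ (Fin n))) x₂ (by linarith : (0:ℝ) ≤ r + d)]
      simp [finrank_euclideanSpace_fin]
    have hball2 : volume (closedBall x₂ r)
        = ENNReal.ofReal (r ^ n) * volume (ball (0 : EuclideanSpace ℝ (Fin n)) 1) := by
      rw [Measure.addHaar_closedBall (volume : Measure (EuclideanSpace ℝ (Fin n))) x₂ hr.le]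
      simp [finrank_euclideanSpace_fin]
    have hfin1 : volume (closedBall x₂ (r + d)) ≠ ⊤ := measure_closedBall_lt_top.ne
    have hle : volume (closedBall x₂ r) ≤ volume (closedBall x₂ (r + d)) :=
      measure_mono (closedBall_subset_closedBall (by linarith))
    have hmono : (volume (closedBall x₁ r \ closedBall x₂ r)).toReal ≤
        (volume (closedBall x₂ (r + d) \ closedBall x₂ r)).toReal := by
      apply ENNReal.toReal_mono
      · rw [hmeas_eq]
        exact (tsub_le_self.trans_lt hfin1.lt_top).ne
      · exact measure_mono hdiff_sub
    have htoReal : (volume (closedBall x₂ (r + d) \ closedBall x₂ r)).toReal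
        = (r + d) ^ n * v1 - r ^ n * v1 := by
      rw [hmeas_eq, ENNReal.toReal_sub_of_le hle hfin1, hball1, hball2,
        ENNReal.toReal_mul, ENNReal.toReal_mul, ENNReal.toReal_ofReal (by positivity),
        ENNReal.toReal_ofReal (by positivity), hv1]
    have hpow : (r + d) ^ n - r ^ n ≤ (n : ℝ) * (2 * r) ^ (n - 1) * d := by
      obtain ⟨m, rfl⟩ : ∃ m, n = m + 1 := ⟨n - 1, (Nat.succ_pred_eq_of_pos hn).symm⟩
      have h1 := aux_pow m hr.le (by linarith : r ≤ r + d)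
      have h2 : (r + d) ^ m ≤ (2 * r) ^ m := pow_le_pow_left₀ (by linarith) (by linarith) m
      have h3 : ((m : ℝ) + 1) * (r + d) ^ m ≤ ((m : ℝ) + 1) * (2 * r) ^ m := by
        apply mul_le_mul_of_nonneg_left h2; positivity
      have h4 : r + d - r = d := by ring
      simp only [Nat.add_sub_cancel]
      push_cast
      nlinarith [pow_nonneg (by linarith : (0:ℝ) ≤ r + d) m]
    calc (volume (closedBall x₁ r \ closedBall x₂ r)).toReal
        ≤ (r + d) ^ n * v1 - r ^ n * v1 := by rw [← htoReal]; exact hmono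
      _ = ((r + d) ^ n - r ^ n) * v1 := by ring
      _ ≤ ((n : ℝ) * (2 * r) ^ (n - 1) * d) * v1 := by
          apply mul_le_mul_of_nonneg_right hpow hv10
      _ = ((n : ℝ) * (2 * r) ^ (n - 1) * v1) * d := by ring
      _ ≤ ((n : ℝ) * (2 * r) ^ (n - 1) * v1 +
            (volume (closedBall (0 : EuclideanSpace ℝ (Fin n)) r)).toReal / r) * d := by nlinarith
  · -- large translation case
    push_neg at hcase
    have hmono : (volume (closedBall x₁ r \ closedBall x₂ r)).toReal ≤
        (volume (closedBall (0 : EuclideanSpace ℝ (Fin n)) r)).toReal := by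
      apply ENNReal.toReal_mono measure_closedBall_lt_top.ne
      calc volume (closedBall x₁ r \ closedBall x₂ r) ≤ volume (closedBall x₁ r) :=
            measure_mono diff_subset
        _ = volume (closedBall (0 : EuclideanSpace ℝ (Fin n)) r) := Measure.addHaar_closedBall_center _ _ _
    have h2 : (volume (closedBall (0 : EuclideanSpace ℝ (Fin n)) r)).toReal ≤
        ((volume (closedBall (0 : EuclideanSpace ℝ (Fin n)) r)).toReal / r) * d := by
      rw [div_mul_eq_mul_div, le_div_iff₀ hr]
      have : 0 ≤ (volume (closedBall (0 : EuclideanSpace ℝ (Fin n)) r)).toReal := ENNReal.toReal_nonneg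
      nlinarith
    calc (volume (closedBall x₁ r \ closedBall x₂ r)).toReal
        ≤ ((volume (closedBall (0 : EuclideanSpace ℝ (Fin n)) r)).toReal / r) * d := hmono.trans h2
      _ ≤ ((n : ℝ) * (2 * r) ^ (n - 1) * v1 +
            (volume (closedBall (0 : EuclideanSpace ℝ (Fin n)) r)).toReal / r) * d := by nlinarith

lemma fderiv_integrableOn {M : ℝ≥0} {g : EuclideanSpace ℝ (Fin n) → F}
    (hg : LipschitzWith M g) (s : Set (EuclideanSpace ℝ (Fin n))) (hs : MeasurableSet s)
    (hfin : volume s ≠ ⊤) (x : EuclideanSpace ℝ (Fin n)) :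
    IntegrableOn (fun y => fderiv ℝ g (x + y)) s volume := by
  have hbd : ∀ z, ‖fderiv ℝ g z‖ ≤ (M : ℝ) := fun z => norm_fderiv_le_of_lipschitz ℝ hg
  have hmeas : AEStronglyMeasurable (fun y => fderiv ℝ g (x + y)) (volume.restrict s) :=
    ((measurable_fderiv ℝ g).comp (measurable_const_add x)).aestronglyMeasurable
  refine Integrable.mono' (g := fun _ => (M : ℝ)) (integrableOn_const hfin) hmeas ?_
  exact Eventually.of_forall fun y => hbd _

lemma skAvg_lipschitz {r : ℝ} (hr : 0 < r) {M : ℝ≥0} {g : EuclideanSpace ℝ (Fin n) → F}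
    (hg : LipschitzWith M g) : LipschitzWith M (skAvg r g) := by
  set D := closedBall (0 : EuclideanSpace ℝ (Fin n)) r with hD
  have hDc : IsCompact D := isCompact_closedBall _ _
  have hDfin : volume D ≠ ⊤ := hDc.measure_lt_top.ne
  have hDpos : 0 < (volume D).toReal :=
    ENNReal.toReal_pos (measure_closedBall_pos volume _ hr).ne' hDfin
  have hint : ∀ x : EuclideanSpace ℝ (Fin n), IntegrableOn (fun y => g (x + y)) D volume := by
    intro x
    have hcont : Continuous fun y : EuclideanSpace ℝ (Fin n) => g (x + y) :=
      hg.continuous.comp (continuous_const.add continuous_id)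
    exact hcont.continuousOn.integrableOn_compact hDc
  apply LipschitzWith.of_dist_le_mul
  intro x₁ x₂
  rw [dist_eq_norm, dist_eq_norm]
  have heq : skAvg r g x₁ - skAvg r g x₂
      = (volume D).toReal⁻¹ • ∫ y in D, (g (x₁ + y) - g (x₂ + y)) := by
    rw [integral_sub (hint x₁) (hint x₂), smul_sub]; rfl
  rw [heq, norm_smul]
  have hptwise : ∀ y ∈ D, ‖g (x₁ + y) - g (x₂ + y)‖ ≤ (M : ℝ) * ‖x₁ - x₂‖ := by
    intro y _
    have h := hg.dist_le_mul (x₁ + y) (x₂ + y)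
    rw [dist_eq_norm, dist_eq_norm, add_sub_add_right_eq_sub] at h
    exact h
  have hbound : ‖∫ y in D, (g (x₁ + y) - g (x₂ + y))‖ ≤ ((M : ℝ) * ‖x₁ - x₂‖) * (volume D).toReal :=
    norm_setIntegral_le_of_norm_le_const hDfin.lt_top hptwise
  have hnorm_inv : ‖(volume D).toReal⁻¹‖ = (volume D).toReal⁻¹ := by
    rw [Real.norm_eq_abs, abs_of_nonneg (by positivity)]
  rw [hnorm_inv]
  calc (volume D).toReal⁻¹ * ‖∫ y in D, (g (x₁ + y) - g (x₂ + y))‖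
      ≤ (volume D).toReal⁻¹ * (((M : ℝ) * ‖x₁ - x₂‖) * (volume D).toReal) := by
        apply mul_le_mul_of_nonneg_left hbound (by positivity)
    _ = (M : ℝ) * ‖x₁ - x₂‖ := by
        field_simp

lemma skAvg_hasFDerivAt {r : ℝ} (hr : 0 < r) {M : ℝ≥0} {g : EuclideanSpace ℝ (Fin n) → F}
    (hg : LipschitzWith M g) (x : EuclideanSpace ℝ (Fin n)) :
    HasFDerivAt (skAvg r g) (skDeriv r g x) x := by
  set D := closedBall (0 : EuclideanSpace ℝ (Fin n)) r with hD
  have hDm : MeasurableSet D := measurableSet_closedBall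
  have hDc : IsCompact D := isCompact_closedBall _ _
  have hDfin : volume D ≠ ⊤ := hDc.measure_lt_top.ne
  have hg_int : ∀ x', IntegrableOn (fun y => g (x' + y)) D volume := by
    intro x'
    have hcont : Continuous fun y : EuclideanSpace ℝ (Fin n) => g (x' + y) :=
      hg.continuous.comp (continuous_const.add continuous_id)
    exact hcont.continuousOn.integrableOn_compact hDc
  have hfd_int : IntegrableOn (fun y => fderiv ℝ g (x + y)) D volume :=
    fderiv_integrableOn hg D hDm hDfin x
  have hbd : ∀ z, ‖fderiv ℝ g z‖ ≤ (M : ℝ) := fun z => norm_fderiv_le_of_lipschitz ℝ hg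
  have hae : ∀ᵐ y ∂(volume : Measure (EuclideanSpace ℝ (Fin n))),
      DifferentiableAt ℝ g (x + y) := by
    have h0 := hg.ae_differentiableAt (μ := (volume : Measure (EuclideanSpace ℝ (Fin n))))
    rw [ae_iff] at h0 ⊢
    have hpre : {y : EuclideanSpace ℝ (Fin n) | ¬ DifferentiableAt ℝ g (x + y)}
        = (fun y => x + y) ⁻¹' {z | ¬ DifferentiableAt ℝ g z} := rfl
    rw [hpre, measure_preimage_add]
    exact h0
  set G : EuclideanSpace ℝ (Fin n) → EuclideanSpace ℝ (Fin n) → F := fun x' y =>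
    ‖x' - x‖⁻¹ • (g (x' + y) - g (x + y) - fderiv ℝ g (x + y) (x' - x)) with hG
  have hT : Filter.Tendsto (fun x' => ∫ y in D, G x' y) (nhdsWithin x {x}ᶜ) (nhds 0) := by
    have hmain := tendsto_integral_filter_of_dominated_convergence
      (μ := volume.restrict D) (l := nhdsWithin x {x}ᶜ)
      (F := G) (f := fun _ => (0 : F)) (bound := fun _ => 2 * (M : ℝ)) ?_ ?_ ?_ ?_
    · simpa using hmain
    · apply Eventually.of_forall
      intro x'
      have m1 : AEStronglyMeasurable (fun y => g (x' + y) - g (x + y)) (volume.restrict D) :=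
        ((hg.continuous.comp (continuous_const.add continuous_id)).sub
          (hg.continuous.comp (continuous_const.add continuous_id))).aestronglyMeasurable
      have m2 : AEStronglyMeasurable (fun y => fderiv ℝ g (x + y) (x' - x))
          (volume.restrict D) :=
        (ContinuousLinearMap.apply ℝ F (x' - x)).continuous.comp_aestronglyMeasurable
          hfd_int.aestronglyMeasurable
      exact (m1.sub m2).const_smul _
    · filter_upwards [self_mem_nhdsWithin] with x' hx'
      apply Eventually.of_forall
      intro y
      have hxne : x' - x ≠ 0 := sub_ne_zero.2 hx'
      have hnorm_pos : 0 < ‖x' - x‖ := norm_pos_iff.2 hxne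
      have h1 : ‖g (x' + y) - g (x + y)‖ ≤ (M : ℝ) * ‖x' - x‖ := by
        have h := hg.dist_le_mul (x' + y) (x + y)
        rwa [dist_eq_norm, dist_eq_norm, add_sub_add_right_eq_sub] at h
      have h2 : ‖fderiv ℝ g (x + y) (x' - x)‖ ≤ (M : ℝ) * ‖x' - x‖ :=
        le_trans ((fderiv ℝ g (x + y)).le_opNorm _)
          (mul_le_mul_of_nonneg_right (hbd _) (norm_nonneg _))
      have h3 : ‖g (x' + y) - g (x + y) - fderiv ℝ g (x + y) (x' - x)‖
          ≤ 2 * (M : ℝ) * ‖x' - x‖ := by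
        calc ‖g (x' + y) - g (x + y) - fderiv ℝ g (x + y) (x' - x)‖
            ≤ ‖g (x' + y) - g (x + y)‖ + ‖fderiv ℝ g (x + y) (x' - x)‖ := norm_sub_le _ _
          _ ≤ 2 * (M : ℝ) * ‖x' - x‖ := by linarith
      show ‖‖x' - x‖⁻¹ • (g (x' + y) - g (x + y) - fderiv ℝ g (x + y) (x' - x))‖ ≤ 2 * (M : ℝ)
      calc ‖‖x' - x‖⁻¹ • (g (x' + y) - g (x + y) - fderiv ℝ g (x + y) (x' - x))‖
          = ‖x' - x‖⁻¹ * ‖g (x' + y) - g (x + y) - fderiv ℝ g (x + y) (x' - x)‖ := by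
            rw [norm_smul, Real.norm_eq_abs, abs_of_nonneg (by positivity)]
        _ ≤ ‖x' - x‖⁻¹ * (2 * (M : ℝ) * ‖x' - x‖) :=
            mul_le_mul_of_nonneg_left h3 (by positivity)
        _ = 2 * (M : ℝ) := by field_simp
    · exact integrableOn_const hDfin
    · apply ae_restrict_of_ae
      filter_upwards [hae] with y hy
      have hF := hy.hasFDerivAt
      rw [hasFDerivAt_iff_tendsto] at hF
      have hcomp : Filter.Tendsto (fun x' : EuclideanSpace ℝ (Fin n) => x' + y)
          (nhds x) (nhds (x + y)) := by
        have := (continuous_id.add (continuous_const (y := y))).tendsto x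
        exact this
      have h5 := hF.comp hcomp
      have h6 : Filter.Tendsto (fun x' => ‖G x' y‖) (nhds x) (nhds 0) := by
        apply h5.congr
        intro x'
        show ‖x' + y - (x + y)‖⁻¹ * ‖g (x' + y) - g (x + y) - (fderiv ℝ g (x + y)) (x' + y - (x + y))‖
          = ‖G x' y‖
        rw [hG]
        simp only [add_sub_add_right_eq_sub]
        rw [norm_smul, Real.norm_eq_abs, abs_of_nonneg (by positivity)]
      have h7 : Filter.Tendsto (fun x' => G x' y) (nhds x) (nhds 0) :=
        tendsto_zero_iff_norm_tendsto_zero.2 h6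
      exact h7.mono_left nhdsWithin_le_nhds
  rw [hasFDerivAt_iff_tendsto]
  have heq : ∀ x', ‖x' - x‖⁻¹ * ‖skAvg r g x' - skAvg r g x - skDeriv r g x (x' - x)‖
      = ‖(volume D).toReal⁻¹ • ∫ y in D, G x' y‖ := by
    intro x'
    by_cases hx' : x' = x
    · subst hx'
      simp [hG, skAvg]
    · have hint3 : IntegrableOn (fun y => fderiv ℝ g (x + y) (x' - x)) D volume :=
        hfd_int.apply_continuousLinearMap _
      have e1 : skAvg r g x' - skAvg r g x - skDeriv r g x (x' - x)
          = (volume D).toReal⁻¹ •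
            ∫ y in D, (g (x' + y) - g (x + y) - fderiv ℝ g (x + y) (x' - x)) := by
        have hint12 : IntegrableOn (fun y => g (x' + y) - g (x + y)) D volume :=
          (hg_int x').sub (hg_int x)
        simp only [skAvg, skDeriv, ContinuousLinearMap.smul_apply, ← hD]
        rw [ContinuousLinearMap.integral_apply hfd_int, integral_sub hint12 hint3,
          integral_sub (hg_int x') (hg_int x), smul_sub, smul_sub]
      have e2 : (∫ y in D, G x' y)
          = ‖x' - x‖⁻¹ • ∫ y in D, (g (x' + y) - g (x + y) - fderiv ℝ g (x + y) (x' - x)) := by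
        rw [hG]
        exact integral_smul _ _
      rw [e1, e2, norm_smul, norm_smul, norm_smul]
      simp only [Real.norm_eq_abs]
      rw [abs_of_nonneg (show (0:ℝ) ≤ (volume D).toReal⁻¹ by positivity),
        abs_of_nonneg (show (0:ℝ) ≤ ‖x' - x‖⁻¹ by positivity)]
      ring
  have hT2 : Filter.Tendsto (fun x' => ‖(volume D).toReal⁻¹ • ∫ y in D, G x' y‖)
      (nhdsWithin x {x}ᶜ) (nhds 0) := by
    have h8 := hT.const_smul ((volume D).toReal⁻¹)
    rw [smul_zero] at h8
    simpa using h8.norm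
  have hfinal : Filter.Tendsto (fun x' => ‖(volume D).toReal⁻¹ • ∫ y in D, G x' y‖)
      (nhds x) (nhds 0) := by
    rw [← nhdsNE_sup_pure x, Filter.tendsto_sup]
    refine ⟨hT2, ?_⟩
    have hval : ‖(volume D).toReal⁻¹ • ∫ y in D, G x y‖ = 0 := by
      simp [hG]
    have h9 := tendsto_pure_nhds (fun x' => ‖(volume D).toReal⁻¹ • ∫ y in D, G x' y‖) x
    rw [hval] at h9
    exact h9
  exact hfinal.congr (fun x' => (heq x').symm)

lemma skDeriv_lipschitz (hn : 1 ≤ n) {r : ℝ} (hr : 0 < r) {M : ℝ≥0}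
    {g : EuclideanSpace ℝ (Fin n) → F} (hg : LipschitzWith M g) :
    ∃ K : ℝ≥0, LipschitzWith K (skDeriv r g) := by
  have hbd : ∀ z, ‖fderiv ℝ g z‖ ≤ (M : ℝ) := fun z => norm_fderiv_le_of_lipschitz ℝ hg
  set C0 := (n : ℝ) * (2 * r) ^ (n - 1) *
      (volume (ball (0 : EuclideanSpace ℝ (Fin n)) 1)).toReal +
      (volume (closedBall (0 : EuclideanSpace ℝ (Fin n)) r)).toReal / r with hC0
  have hC0nonneg : 0 ≤ C0 := by
    rw [hC0]
    have : (0:ℝ) ≤ (volume (closedBall (0 : EuclideanSpace ℝ (Fin n)) r)).toReal / r :=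
      div_nonneg ENNReal.toReal_nonneg hr.le
    positivity
  set c := (volume (closedBall (0 : EuclideanSpace ℝ (Fin n)) r)).toReal⁻¹ with hc
  have hc0 : 0 ≤ c := by rw [hc]; positivity
  have hI : ∀ x : EuclideanSpace ℝ (Fin n), IntegrableOn (fderiv ℝ g) (closedBall x r) volume := by
    intro x
    refine Integrable.mono' (g := fun _ => (M : ℝ))
      (integrableOn_const measure_closedBall_lt_top.ne) ?_ ?_
    · exact (measurable_fderiv ℝ g).aestronglyMeasurable
    · exact Eventually.of_forall fun z => hbd z
  have himg : ∀ x : EuclideanSpace ℝ (Fin n),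
      (fun y => x + y) '' closedBall (0 : EuclideanSpace ℝ (Fin n)) r = closedBall x r := by
    intro x
    ext z
    constructor
    · rintro ⟨y, hy, rfl⟩
      rw [mem_closedBall_zero_iff] at hy
      rw [mem_closedBall_iff_norm]
      simpa using hy
    · intro hz
      rw [mem_closedBall_iff_norm] at hz
      exact ⟨z - x, by rwa [mem_closedBall_zero_iff], by show x + (z - x) = z; rw [add_comm x (z - x), sub_add_cancel]⟩
  have htrans : ∀ x : EuclideanSpace ℝ (Fin n),
      (∫ y in closedBall (0 : EuclideanSpace ℝ (Fin n)) r, fderiv ℝ g (x + y))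
        = ∫ z in closedBall x r, fderiv ℝ g z := by
    intro x
    rw [← himg x]
    have hmp : MeasurePreserving (fun y : EuclideanSpace ℝ (Fin n) => x + y) volume volume :=
      measurePreserving_add_left volume x
    have hme : MeasurableEmbedding (fun y : EuclideanSpace ℝ (Fin n) => x + y) :=
      (MeasurableEquiv.addLeft x).measurableEmbedding
    exact (hmp.setIntegral_image_emb hme (fderiv ℝ g)
      (closedBall (0 : EuclideanSpace ℝ (Fin n)) r)).symm
  have hdiffbound : ∀ (x₁ x₂ : EuclideanSpace ℝ (Fin n)),
      ‖∫ z in closedBall x₁ r \ closedBall x₂ r, fderiv ℝ g z‖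
        ≤ (M : ℝ) * (C0 * ‖x₁ - x₂‖) := by
    intro x₁ x₂
    have hfin : volume (closedBall x₁ r \ closedBall x₂ r) < ⊤ :=
      (measure_mono diff_subset).trans_lt measure_closedBall_lt_top
    have hb := norm_setIntegral_le_of_norm_le_const hfin
      (fun z _ => hbd z)
    refine hb.trans ?_
    rw [hC0]
    exact mul_le_mul_of_nonneg_left (measure_sdiff_le hn hr x₁ x₂) M.coe_nonneg
  refine ⟨Real.toNNReal (c * (2 * (M : ℝ) * C0)), ?_⟩
  apply LipschitzWith.of_dist_le_mul
  intro x₁ x₂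
  rw [dist_eq_norm, dist_eq_norm]
  have hsplit : (∫ z in closedBall x₁ r, fderiv ℝ g z) - ∫ z in closedBall x₂ r, fderiv ℝ g z
      = (∫ z in closedBall x₁ r \ closedBall x₂ r, fderiv ℝ g z)
        - ∫ z in closedBall x₂ r \ closedBall x₁ r, fderiv ℝ g z := by
    have h1 := integral_inter_add_diff (μ := volume) (f := fderiv ℝ g)
      (s := closedBall x₁ r) (t := closedBall x₂ r) measurableSet_closedBall (hI x₁)
    have h2 := integral_inter_add_diff (μ := volume) (f := fderiv ℝ g)
      (s := closedBall x₂ r) (t := closedBall x₁ r) measurableSet_closedBall (hI x₂)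
    rw [Set.inter_comm] at h2
    rw [← h1, ← h2]
    abel
  have e : skDeriv r g x₁ - skDeriv r g x₂
      = c • ((∫ z in closedBall x₁ r \ closedBall x₂ r, fderiv ℝ g z)
          - ∫ z in closedBall x₂ r \ closedBall x₁ r, fderiv ℝ g z) := by
    simp only [skDeriv, ← hc, htrans, ← smul_sub, hsplit]
  rw [e]
  have hns := norm_smul_nonneg' hc0 ((∫ z in closedBall x₁ r \ closedBall x₂ r, fderiv ℝ g z)
      - ∫ z in closedBall x₂ r \ closedBall x₁ r, fderiv ℝ g z)
  rw [hns]
  have hnorm : ‖(∫ z in closedBall x₁ r \ closedBall x₂ r, fderiv ℝ g z)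
      - ∫ z in closedBall x₂ r \ closedBall x₁ r, fderiv ℝ g z‖
      ≤ 2 * (M : ℝ) * (C0 * ‖x₁ - x₂‖) := by
    have hb1 := hdiffbound x₁ x₂
    have hb2 := hdiffbound x₂ x₁
    rw [norm_sub_rev x₂ x₁] at hb2
    calc ‖(∫ z in closedBall x₁ r \ closedBall x₂ r, fderiv ℝ g z)
        - ∫ z in closedBall x₂ r \ closedBall x₁ r, fderiv ℝ g z‖
        ≤ ‖∫ z in closedBall x₁ r \ closedBall x₂ r, fderiv ℝ g z‖
          + ‖∫ z in closedBall x₂ r \ closedBall x₁ r, fderiv ℝ g z‖ := norm_sub_le _ _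
      _ ≤ 2 * (M : ℝ) * (C0 * ‖x₁ - x₂‖) := by linarith
  calc c * ‖(∫ z in closedBall x₁ r \ closedBall x₂ r, fderiv ℝ g z)
      - ∫ z in closedBall x₂ r \ closedBall x₁ r, fderiv ℝ g z‖
      ≤ c * (2 * (M : ℝ) * (C0 * ‖x₁ - x₂‖)) := mul_le_mul_of_nonneg_left hnorm hc0
    _ = (c * (2 * (M : ℝ) * C0)) * ‖x₁ - x₂‖ := by ring
    _ ≤ (Real.toNNReal (c * (2 * (M : ℝ) * C0)) : ℝ) * ‖x₁ - x₂‖ := by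
        rw [Real.coe_toNNReal _ (by positivity)]

end Aux

/-- For Lipschitz `f` and `D` a closed ball of radius `r > 0` centered at the origin,
the second derivative map of the double Steklov average is Lipschitz. -/
theorem steklov_double_average_second_deriv_lipschitz (n : ℕ) (hn : 1 ≤ n)
    (r : ℝ) (hr : 0 < r)
    (f : EuclideanSpace ℝ (Fin n) → ℝ) (L : ℝ≥0) (hf : LipschitzWith L f) :
    ∃ K : ℝ, 0 ≤ K ∧ ∀ x₁ x₂ : EuclideanSpace ℝ (Fin n),
      ‖iteratedFDeriv ℝ 2 (steklovAvg₂ n (Metric.closedBall 0 r) f) x₁ -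
        iteratedFDeriv ℝ 2 (steklovAvg₂ n (Metric.closedBall 0 r) f) x₂‖ ≤
        K * ‖x₁ - x₂‖ := by
  classical
  -- identify `steklovAvg₂` with iterated `skAvg`
  have hΦ : steklovAvg₂ n (Metric.closedBall 0 r) f = skAvg r (skAvg r f) := rfl
  -- first average is Lipschitz
  have hφ : LipschitzWith L (skAvg r f) := skAvg_lipschitz hr hf
  -- first derivative of the first average
  have hφ' : ∀ x, HasFDerivAt (skAvg r f) (skDeriv r f x) x := skAvg_hasFDerivAt hr hf
  obtain ⟨K₁, hK₁⟩ := skDeriv_lipschitz hn hr hf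
  -- second average
  have hΦ' : ∀ x, HasFDerivAt (skAvg r (skAvg r f)) (skDeriv r (skAvg r f) x) x :=
    skAvg_hasFDerivAt hr hφ
  have hfd1 : fderiv ℝ (skAvg r (skAvg r f)) = skDeriv r (skAvg r f) :=
    funext fun x => (hΦ' x).fderiv
  have hfdφ : fderiv ℝ (skAvg r f) = skDeriv r f := funext fun x => (hφ' x).fderiv
  have hkey : skDeriv r (skAvg r f) = skAvg r (skDeriv r f) := by
    funext x
    simp only [skDeriv, skAvg, hfdφ]
  have h2 : ∀ x, HasFDerivAt (skAvg r (skDeriv r f)) (skDeriv r (skDeriv r f) x) x :=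
    skAvg_hasFDerivAt hr hK₁
  obtain ⟨K₂, hK₂⟩ := skDeriv_lipschitz hn hr hK₁
  have hfd2 : fderiv ℝ (fderiv ℝ (skAvg r (skAvg r f))) = skDeriv r (skDeriv r f) := by
    rw [hfd1, hkey]
    exact funext fun x => (h2 x).fderiv
  refine ⟨K₂, K₂.coe_nonneg, fun x₁ x₂ => ?_⟩
  rw [hΦ]
  have hB : ‖skDeriv r (skDeriv r f) x₁ - skDeriv r (skDeriv r f) x₂‖ ≤ (K₂ : ℝ) * ‖x₁ - x₂‖ := by
    have := hK₁
    have h := hK₂.dist_le_mul x₁ x₂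
    rwa [dist_eq_norm, dist_eq_norm] at h
  have happ : ∀ x m, iteratedFDeriv ℝ 2 (skAvg r (skAvg r f)) x m =
      skDeriv r (skDeriv r f) x (m 0) (m 1) := by
    intro x m
    rw [iteratedFDeriv_two_apply, hfd2]
  refine ContinuousMultilinearMap.opNorm_le_bound
    (mul_nonneg K₂.coe_nonneg (norm_nonneg _)) fun m => ?_
  have : (iteratedFDeriv ℝ 2 (skAvg r (skAvg r f)) x₁ -
      iteratedFDeriv ℝ 2 (skAvg r (skAvg r f)) x₂) m =
      (skDeriv r (skDeriv r f) x₁ - skDeriv r (skDeriv r f) x₂) (m 0) (m 1) := by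
    simp [ContinuousMultilinearMap.sub_apply, happ, ContinuousLinearMap.sub_apply]
  rw [this]
  calc ‖(skDeriv r (skDeriv r f) x₁ - skDeriv r (skDeriv r f) x₂) (m 0) (m 1)‖
      ≤ ‖(skDeriv r (skDeriv r f) x₁ - skDeriv r (skDeriv r f) x₂) (m 0)‖ * ‖m 1‖ :=
        ContinuousLinearMap.le_opNorm _ _
    _ ≤ (‖skDeriv r (skDeriv r f) x₁ - skDeriv r (skDeriv r f) x₂‖ * ‖m 0‖) * ‖m 1‖ :=
        mul_le_mul_of_nonneg_right (ContinuousLinearMap.le_opNorm _ _) (norm_nonneg _)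
    _ ≤ (((K₂ : ℝ) * ‖x₁ - x₂‖) * ‖m 0‖) * ‖m 1‖ := by
        gcongr
    _ = (K₂ : ℝ) * ‖x₁ - x₂‖ * ∏ i : Fin 2, ‖m i‖ := by
        rw [Fin.prod_univ_two]; ring
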